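/- A positive odd integer a = ∏_{p prime} p^{α_p} is the order of some element of the alternating group A_n if and only if the sum over primes p dividing a of p^{α_p} is at most n. For even a, a is the order of some element of A_n if and only if 2 + ∑_{p | a} p^{α_p} ≤ n. -/
import Mathlib

lemma aux_parity (c : Multiset ℕ) :
    (c.sum + Multiset.card c) % 2 = (Multiset.countP (fun x => 2 ∣ x) c) % 2 := by
  induction c using Multiset.induction_on with
  | empty => simp
  | cons x c ih =>
    rw [Multiset.sum_cons, Multiset.card_cons, Multiset.countP_cons]
    by_cases hd : 2 ∣ x
    · simp only [hd, if_pos]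
      omega
    · simp only [hd, if_neg, not_false_iff]
      omega

lemma aux_sum_le_prod {s : Finset ℕ} (hne : s.Nonempty) (g : ℕ → ℕ)
    (h2 : ∀ i ∈ s, 2 ≤ g i) : ∑ i ∈ s, g i ≤ ∏ i ∈ s, g i := by
  induction hne using Finset.Nonempty.cons_induction with
  | singleton a => simp
  | cons a s ha hs ih =>
    rw [Finset.sum_cons, Finset.prod_cons]
    have hga : 2 ≤ g a := h2 a (Finset.mem_cons_self a s)
    have hPr : 2 ≤ ∏ i ∈ s, g i := by
      obtain ⟨b, hb⟩ := hs
      calc 2 ≤ g b := h2 b (Finset.mem_cons_of_mem hb)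
        _ ≤ ∏ i ∈ s, g i := Finset.single_le_prod'
            (fun i hi => Nat.one_le_iff_ne_zero.mpr (by
              have := h2 i (Finset.mem_cons_of_mem hi); omega)) hb
    have ih' := ih (fun i hi => h2 i (Finset.mem_cons_of_mem hi))
    calc g a + ∑ i ∈ s, g i ≤ g a + ∏ i ∈ s, g i := by omega
      _ ≤ g a * ∏ i ∈ s, g i := by nlinarith

lemma aux_prod_pow_dvd {s : Finset ℕ} (hp : ∀ p ∈ s, p.Prime) (e : ℕ → ℕ) {t : ℕ}
    (hd : ∀ p ∈ s, p ^ e p ∣ t) : (∏ p ∈ s, p ^ e p) ∣ t := by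
  induction s using Finset.cons_induction with
  | empty => simp only [Finset.prod_empty]; exact one_dvd t
  | cons a s ha ih =>
    rw [Finset.prod_cons]
    have hco : Nat.Coprime (a ^ e a) (∏ p ∈ s, p ^ e p) := by
      apply Nat.Coprime.pow_left
      apply Nat.Coprime.prod_right
      intro q hq
      apply Nat.Coprime.pow_right
      exact (Nat.coprime_primes (hp a (Finset.mem_cons_self a s)) (hp q (Finset.mem_cons_of_mem hq))).mpr
        (fun h => ha (h ▸ hq))
    exact hco.mul_dvd_of_dvd_of_dvd (hd a (Finset.mem_cons_self a s))
      (ih (fun p hps => hp p (Finset.mem_cons_of_mem hps)) (fun p hps => hd p (Finset.mem_cons_of_mem hps)))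

lemma aux_lcm_ne_zero {m : Multiset ℕ} (h : ∀ x ∈ m, x ≠ 0) : m.lcm ≠ 0 := by
  induction m using Multiset.induction_on with
  | empty => simp
  | cons a m ih =>
    rw [Multiset.lcm_cons]
    have ha : a ≠ 0 := h a (Multiset.mem_cons_self a m)
    have hm : m.lcm ≠ 0 := ih (fun x hx => h x (Multiset.mem_cons_of_mem hx))
    simp [lcm_eq_nat_lcm, Nat.lcm_ne_zero ha hm]

lemma aux_pow_dvd_lcm {m : Multiset ℕ} (h0 : ∀ x ∈ m, x ≠ 0) {p k : ℕ} (hp : p.Prime)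
    (hk : 1 ≤ k) (hd : p ^ k ∣ m.lcm) : ∃ x ∈ m, p ^ k ∣ x := by
  induction m using Multiset.induction_on with
  | empty =>
    exfalso
    simp only [Multiset.lcm_zero] at hd
    have h1 : p ^ k ≤ 1 := Nat.le_of_dvd one_pos hd
    have h2 : 1 < p ^ k := Nat.one_lt_pow (by omega) hp.one_lt
    omega
  | cons a m ih =>
    rw [Multiset.lcm_cons] at hd
    have ha : a ≠ 0 := h0 a (Multiset.mem_cons_self a m)
    have hm : m.lcm ≠ 0 := aux_lcm_ne_zero (fun x hx => h0 x (Multiset.mem_cons_of_mem hx))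
    rw [lcm_eq_nat_lcm] at hd
    rw [hp.pow_dvd_iff_le_factorization (Nat.lcm_ne_zero ha hm), Nat.factorization_lcm ha hm] at hd
    simp only [Finsupp.sup_apply, le_sup_iff] at hd
    rcases hd with hd | hd
    · exact ⟨a, Multiset.mem_cons_self a m, (hp.pow_dvd_iff_le_factorization ha).mpr hd⟩
    · obtain ⟨x, hx, hdx⟩ := ih (fun x hx => h0 x (Multiset.mem_cons_of_mem hx))
        ((hp.pow_dvd_iff_le_factorization hm).mpr hd)
      exact ⟨x, Multiset.mem_cons_of_mem hx, hdx⟩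

lemma aux_weighted_sum {c : Multiset ℕ} {T : Finset ℕ} (hT : T ⊆ c.toFinset)
    (w : ℕ → ℕ) (hw : ∀ t ∈ T, w t ≤ c.count t * t) : ∑ t ∈ T, w t ≤ c.sum := by
  calc ∑ t ∈ T, w t ≤ ∑ t ∈ T, c.count t * t := Finset.sum_le_sum hw
    _ ≤ ∑ t ∈ c.toFinset, c.count t * t :=
        Finset.sum_le_sum_of_subset_of_nonneg hT (fun _ _ _ => Nat.zero_le _)
    _ = c.sum := by
        have := (Finset.sum_multiset_map_count c (id : ℕ → ℕ)).symm
        simpa [smul_eq_mul] using this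

lemma aux_forward (a : ℕ) (ha : 0 < a) (c : Multiset ℕ)
    (h2 : ∀ x ∈ c, 2 ≤ x) (hlcm : c.lcm = a) :
    (∑ p ∈ a.primeFactors, p ^ a.factorization p ≤ c.sum) ∧
    (Even a → Even (c.sum + Multiset.card c) →
      2 + ∑ p ∈ a.primeFactors, p ^ a.factorization p ≤ c.sum) := by
  classical
  set S := a.primeFactors with hS
  set f : ℕ → ℕ := fun p => p ^ a.factorization p with hf
  have h0 : ∀ x ∈ c, x ≠ 0 := fun x hx => by have := h2 x hx; omega
  have hprime : ∀ p ∈ S, p.Prime := fun p hp => Nat.prime_of_mem_primeFactors hp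
  have halpha : ∀ p ∈ S, 1 ≤ a.factorization p := fun p hp =>
    (Nat.prime_of_mem_primeFactors hp).factorization_pos_of_dvd ha.ne'
      (Nat.dvd_of_mem_primeFactors hp)
  have hf2 : ∀ p ∈ S, 2 ≤ f p := fun p hp =>
    le_trans (hprime p hp).two_le (Nat.le_self_pow (by have := halpha p hp; omega) p)
  have H : ∀ p ∈ S, ∃ x, x ∈ c ∧ f p ∣ x := by
    intro p hp
    have hdl : f p ∣ c.lcm := hlcm ▸ Nat.ordProj_dvd a p
    obtain ⟨x, hx, hdx⟩ := aux_pow_dvd_lcm h0 (hprime p hp) (halpha p hp) hdl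
    exact ⟨x, hx, hdx⟩
  choose! φ hφ using H
  set T : Finset ℕ := S.image φ with hT
  have hTsub : T ⊆ c.toFinset := by
    intro t ht
    obtain ⟨p, hp, rfl⟩ := Finset.mem_image.mp ht
    exact Multiset.mem_toFinset.mpr (hφ p hp).1
  set fib : ℕ → Finset ℕ := fun t => S.filter (fun p => φ p = t) with hfib
  have hsplit : ∑ p ∈ S, f p = ∑ t ∈ T, ∑ p ∈ fib t, f p :=
    (Finset.sum_fiberwise_of_maps_to (fun p hp => Finset.mem_image_of_mem φ hp) f).symm
  set P : ℕ → ℕ := fun t => ∏ p ∈ fib t, f p with hP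
  have hfibne : ∀ t ∈ T, (fib t).Nonempty := by
    intro t ht
    obtain ⟨p, hp, rfl⟩ := Finset.mem_image.mp ht
    exact ⟨p, Finset.mem_filter.mpr ⟨hp, rfl⟩⟩
  have hsumP : ∀ t ∈ T, ∑ p ∈ fib t, f p ≤ P t := fun t ht =>
    aux_sum_le_prod (hfibne t ht) f (fun p hp => hf2 p (Finset.mem_filter.mp hp).1)
  have hPdvd : ∀ t ∈ T, P t ∣ t := by
    intro t ht
    exact aux_prod_pow_dvd (fun p hp => hprime p (Finset.mem_filter.mp hp).1) _
      (fun p hp => (Finset.mem_filter.mp hp).2 ▸ (hφ p (Finset.mem_filter.mp hp).1).2)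
  have htpos : ∀ t ∈ T, 2 ≤ t := fun t ht =>
    h2 t (Multiset.mem_toFinset.mp (hTsub ht))
  have hPle : ∀ t ∈ T, P t ≤ t := fun t ht =>
    Nat.le_of_dvd (by have := htpos t ht; omega) (hPdvd t ht)
  have hP2 : ∀ t ∈ T, 2 ≤ P t := by
    intro t ht
    obtain ⟨p, hp⟩ := hfibne t ht
    exact le_trans (hf2 p (Finset.mem_filter.mp hp).1)
      (Finset.single_le_prod' (fun i hi => le_trans one_le_two (hf2 i (Finset.mem_filter.mp hi).1)) hp)
  have hcount1 : ∀ t ∈ T, 1 ≤ c.count t := fun t ht =>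
    Multiset.one_le_count_iff_mem.mpr (Multiset.mem_toFinset.mp (hTsub ht))
  have main1 : ∑ p ∈ S, f p ≤ c.sum := by
    rw [hsplit]
    calc ∑ t ∈ T, ∑ p ∈ fib t, f p ≤ ∑ t ∈ T, t :=
          Finset.sum_le_sum (fun t ht => le_trans (hsumP t ht) (hPle t ht))
      _ ≤ c.sum := aux_weighted_sum hTsub id (fun t ht => by
          have := hcount1 t ht; have := htpos t ht; simp only [id]; nlinarith)
  refine ⟨main1, ?_⟩
  intro hEa hparity
  -- 2 is a prime factor
  have h2S : 2 ∈ S := Nat.mem_primeFactors.mpr ⟨Nat.prime_two, hEa.two_dvd, ha.ne'⟩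
  set t₀ := φ 2 with ht₀
  have ht₀T : t₀ ∈ T := Finset.mem_image_of_mem φ h2S
  have ht₀c : t₀ ∈ c := (hφ 2 h2S).1
  have ht₀even : 2 ∣ t₀ := dvd_trans (dvd_trans (dvd_pow_self 2 (by have := halpha 2 h2S; omega)) (dvd_refl _)) (hφ 2 h2S).2
  -- evens in c counted with multiplicity is even
  have hCPeven : Even (Multiset.countP (fun x => 2 ∣ x) c) := by
    have := aux_parity c
    rcases hparity with ⟨m, hm⟩
    rw [hm] at this
    exact Nat.even_iff.mpr (by omega)
  have hCP1 : 0 < Multiset.countP (fun x => 2 ∣ x) c :=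
    Multiset.countP_pos.mpr ⟨t₀, ht₀c, ht₀even⟩
  have hCP2 : 2 ≤ Multiset.countP (fun x => 2 ∣ x) c := by
    rcases hCPeven with ⟨m, hm⟩; omega
  by_cases hex : ∃ t₁ ∈ c, 2 ∣ t₁ ∧ t₁ ≠ t₀
  · obtain ⟨t₁, ht₁c, ht₁even, ht₁ne⟩ := hex
    by_cases ht₁T : t₁ ∈ T
    · -- t₁ ∈ T : its fiber consists of odd primes, so P t₁ is odd, P t₁ + 2 ≤ t₁
      have hodd : ¬ (2 ∣ P t₁) := by
        intro hdvd
        obtain ⟨p, hp, hdp⟩ := (Nat.prime_two.prime.dvd_finset_prod_iff _).mp hdvd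
        have hpS := (Finset.mem_filter.mp hp).1
        have hpe := (Finset.mem_filter.mp hp).2
        have : (2 : ℕ) ∣ p := Nat.Prime.dvd_of_dvd_pow Nat.prime_two hdp
        have hp2 : p = 2 := ((Nat.prime_dvd_prime_iff_eq Nat.prime_two (hprime p hpS)).mp this).symm
        exact ht₁ne (by rw [← hpe, hp2])
      have hco : Nat.Coprime 2 (P t₁) := (Nat.Prime.coprime_iff_not_dvd Nat.prime_two).mpr hodd
      have h2P : 2 * P t₁ ∣ t₁ := hco.mul_dvd_of_dvd_of_dvd ht₁even (hPdvd t₁ ht₁T)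
      have hkey : P t₁ + 2 ≤ t₁ := by
        have := Nat.le_of_dvd (by have := h2 t₁ ht₁c; omega) h2P
        have := hP2 t₁ ht₁T
        omega
      -- 2 + ∑ P ≤ ∑ t over T
      rw [hsplit]
      have step1 : 2 + ∑ t ∈ T, ∑ p ∈ fib t, f p ≤ ∑ t ∈ T, t := by
        rw [← Finset.add_sum_erase T (fun t => ∑ p ∈ fib t, f p) ht₁T,
            ← Finset.add_sum_erase T (fun t => t) ht₁T]
        have hrest : ∑ t ∈ T.erase t₁, ∑ p ∈ fib t, f p ≤ ∑ t ∈ T.erase t₁, t :=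
          Finset.sum_le_sum (fun t ht => le_trans (hsumP t (Finset.mem_of_mem_erase ht))
            (hPle t (Finset.mem_of_mem_erase ht)))
        have h1 : ∑ p ∈ fib t₁, f p ≤ P t₁ := hsumP t₁ ht₁T
        omega
      calc 2 + ∑ t ∈ T, ∑ p ∈ fib t, f p ≤ ∑ t ∈ T, t := step1
        _ ≤ c.sum := aux_weighted_sum hTsub id (fun t ht => by
            have := hcount1 t ht; have := htpos t ht; simp only [id]; nlinarith)
    · -- t₁ ∉ T : add it
      rw [hsplit]
      have hsub' : insert t₁ T ⊆ c.toFinset := by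
        intro x hx
        rcases Finset.mem_insert.mp hx with rfl | hx
        · exact Multiset.mem_toFinset.mpr ht₁c
        · exact hTsub hx
      calc 2 + ∑ t ∈ T, ∑ p ∈ fib t, f p
          ≤ t₁ + ∑ t ∈ T, t := by
            have h1 : ∑ t ∈ T, ∑ p ∈ fib t, f p ≤ ∑ t ∈ T, t :=
              Finset.sum_le_sum (fun t ht => le_trans (hsumP t ht) (hPle t ht))
            have h2' : 2 ≤ t₁ := h2 t₁ ht₁c
            omega
        _ = ∑ t ∈ insert t₁ T, t := (Finset.sum_insert (f := fun t => t) ht₁T).symm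
        _ ≤ c.sum := aux_weighted_sum hsub' id (fun t ht => by
            have h1 : 1 ≤ c.count t := Multiset.one_le_count_iff_mem.mpr
              (Multiset.mem_toFinset.mp (hsub' ht))
            have h2' : 2 ≤ t := h2 t (Multiset.mem_toFinset.mp (hsub' ht))
            simp only [id]; nlinarith)
  · -- all even elements equal t₀, so count t₀ ≥ 2
    push_neg at hex
    have hcnt : 2 ≤ c.count t₀ := by
      rw [show (2 ≤ Multiset.count t₀ c) ↔ _ from Multiset.le_count_iff_replicate_le]
      have hfil : c.filter (fun x => 2 ∣ x) = Multiset.replicate (Multiset.countP (fun x => 2 ∣ x) c) t₀ := by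
        rw [Multiset.countP_eq_card_filter]
        apply Multiset.eq_replicate_card.mpr
        intro b hb
        have hbc := Multiset.mem_filter.mp hb
        exact hex b hbc.1 hbc.2
      calc Multiset.replicate 2 t₀ ≤ Multiset.replicate (Multiset.countP (fun x => 2 ∣ x) c) t₀ :=
            Multiset.replicate_le_replicate t₀ |>.mpr hCP2
        _ = c.filter (fun x => 2 ∣ x) := hfil.symm
        _ ≤ c := Multiset.filter_le _ c
    rw [hsplit]
    have step1 : 2 + ∑ t ∈ T, ∑ p ∈ fib t, f p ≤ ∑ t ∈ T, (if t = t₀ then 2 * t else t) := by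
      rw [← Finset.add_sum_erase T (fun t => ∑ p ∈ fib t, f p) ht₀T,
          ← Finset.add_sum_erase T (fun t => if t = t₀ then 2 * t else t) ht₀T]
      rw [if_pos rfl]
      have hrest : ∑ t ∈ T.erase t₀, ∑ p ∈ fib t, f p ≤ ∑ t ∈ T.erase t₀, (if t = t₀ then 2 * t else t) := by
        apply Finset.sum_le_sum
        intro t ht
        rw [if_neg (Finset.ne_of_mem_erase ht)]
        exact le_trans (hsumP t (Finset.mem_of_mem_erase ht)) (hPle t (Finset.mem_of_mem_erase ht))
      have h1 : ∑ p ∈ fib t₀, f p ≤ P t₀ := hsumP t₀ ht₀T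
      have h2' : P t₀ ≤ t₀ := hPle t₀ ht₀T
      have h3 : 2 ≤ t₀ := htpos t₀ ht₀T
      omega
    calc 2 + ∑ t ∈ T, ∑ p ∈ fib t, f p ≤ ∑ t ∈ T, (if t = t₀ then 2 * t else t) := step1
      _ ≤ c.sum := by
          apply aux_weighted_sum hTsub
          intro t ht
          by_cases heq : t = t₀
          · subst heq
            rw [if_pos rfl]
            have := htpos t₀ ht
            nlinarith [hcnt]
          · rw [if_neg heq]
            have := hcount1 t ht; have := htpos t ht
            nlinarith

lemma aux_exists_iff (n a : ℕ) :
    (∃ g : alternatingGroup (Fin n), orderOf g = a) ↔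
    ∃ σ : Equiv.Perm (Fin n), Equiv.Perm.sign σ = 1 ∧ orderOf σ = a := by
  constructor
  · rintro ⟨g, hg⟩
    exact ⟨g, (Equiv.Perm.mem_alternatingGroup).mp g.2, (Subgroup.orderOf_coe g).trans hg⟩
  · rintro ⟨σ, h1, h2⟩
    exact ⟨⟨σ, Equiv.Perm.mem_alternatingGroup.mpr h1⟩, (Subgroup.orderOf_mk σ _).trans h2⟩

lemma aux_odd_parity {S : Finset ℕ} {f : ℕ → ℕ} (h : ∀ p ∈ S, Odd (f p)) :
    Even (∑ p ∈ S, f p + S.card) := by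
  induction S using Finset.cons_induction with
  | empty => simp
  | cons a S ha ih =>
    rw [Finset.sum_cons, Finset.card_cons]
    obtain ⟨k, hk⟩ := h a (Finset.mem_cons_self a S)
    obtain ⟨m, hm⟩ := ih (fun p hp => h p (Finset.mem_cons_of_mem hp))
    exact ⟨m + k + 1, by omega⟩

lemma aux_lcm_eq (a : ℕ) (ha : 0 < a) :
    (a.primeFactors.lcm fun p => p ^ a.factorization p) = a := by
  apply Nat.dvd_antisymm
  · exact Finset.lcm_dvd (fun p hp => Nat.ordProj_dvd a p)
  · have hprod : ∏ p ∈ a.primeFactors, p ^ a.factorization p = a := by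
      rw [Nat.prod_primeFactors_prod_factorization (n := a) (f := fun p => p ^ a.factorization p)]
      exact Nat.factorization_prod_pow_eq_self ha.ne'
    calc a = ∏ p ∈ a.primeFactors, p ^ a.factorization p := hprod.symm
      _ ∣ _ := by
        apply aux_prod_pow_dvd (fun p hp => Nat.prime_of_mem_primeFactors hp)
        intro p hp
        exact Finset.dvd_lcm hp

lemma aux_sign_even {n : ℕ} (σ : Equiv.Perm (Fin n)) (hsign : Equiv.Perm.sign σ = 1) :
    Even (σ.cycleType.sum + Multiset.card σ.cycleType) := by
  by_contra hk
  rw [Nat.not_even_iff_odd] at hk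
  rw [Equiv.Perm.sign_of_cycleType, Odd.neg_one_pow hk] at hsign
  exact absurd hsign (by decide)

theorem stmt_13 (n a : ℕ) (ha : 0 < a) :
    (Odd a →
      ((∃ g : alternatingGroup (Fin n), orderOf g = a) ↔
        ∑ p ∈ a.primeFactors, p ^ (a.factorization p) ≤ n)) ∧
    (Even a →
      ((∃ g : alternatingGroup (Fin n), orderOf g = a) ↔
        2 + ∑ p ∈ a.primeFactors, p ^ (a.factorization p) ≤ n)) := by
  classical
  rw [aux_exists_iff n a]
  set S := a.primeFactors with hS
  set f : ℕ → ℕ := fun p => p ^ a.factorization p with hf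
  have hprime : ∀ p ∈ S, p.Prime := fun p hp => Nat.prime_of_mem_primeFactors hp
  have halpha : ∀ p ∈ S, 1 ≤ a.factorization p := fun p hp =>
    (Nat.prime_of_mem_primeFactors hp).factorization_pos_of_dvd ha.ne'
      (Nat.dvd_of_mem_primeFactors hp)
  have hf2 : ∀ p ∈ S, 2 ≤ f p := fun p hp =>
    le_trans (hprime p hp).two_le (Nat.le_self_pow (by have := halpha p hp; omega) p)
  have hcardn : Fintype.card (Fin n) = n := Fintype.card_fin n
  -- common facts for the forward direction
  have fwd : ∀ σ : Equiv.Perm (Fin n), orderOf σ = a →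
      (∑ p ∈ S, f p ≤ σ.cycleType.sum ∧
       (Even a → Even (σ.cycleType.sum + Multiset.card σ.cycleType) →
          2 + ∑ p ∈ S, f p ≤ σ.cycleType.sum)) := by
    intro σ horder
    exact aux_forward a ha σ.cycleType
      (fun x hx => Equiv.Perm.two_le_of_mem_cycleType hx)
      (by rw [Equiv.Perm.lcm_cycleType, horder])
  have hsupp : ∀ σ : Equiv.Perm (Fin n), σ.cycleType.sum ≤ n := by
    intro σ
    rw [Equiv.Perm.sum_cycleType]
    calc σ.support.card ≤ Fintype.card (Fin n) := Finset.card_le_univ σ.support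
      _ = n := hcardn
  constructor
  · -- odd case
    intro hodd
    have hoddf : ∀ p ∈ S, Odd (f p) := by
      intro p hp
      have hpne2 : p ≠ 2 := by
        intro h
        rw [Nat.odd_iff] at hodd
        have h2a : 2 ∣ a := h ▸ Nat.dvd_of_mem_primeFactors hp
        omega
      exact Odd.pow ((hprime p hp).odd_of_ne_two hpne2)
    constructor
    · rintro ⟨σ, hsign, horder⟩
      exact le_trans (fwd σ horder).1 (hsupp σ)
    · intro hle
      set m : Multiset ℕ := S.val.map f with hm
      have hsum : m.sum = ∑ p ∈ S, f p := rfl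
      have hcard : Multiset.card m = S.card := by simp [hm]
      have hmem2 : ∀ x ∈ m, 2 ≤ x := by
        intro x hx
        obtain ⟨p, hp, rfl⟩ := Multiset.mem_map.mp hx
        exact hf2 p hp
      obtain ⟨σ, hσ⟩ := (Equiv.Perm.exists_with_cycleType_iff (α := Fin n)).mpr
        ⟨by rw [hcardn, hsum]; exact hle, hmem2⟩
      refine ⟨σ, ?_, ?_⟩
      · rw [Equiv.Perm.sign_of_cycleType, hσ, hsum, hcard]
        exact Even.neg_one_pow (aux_odd_parity hoddf)
      · rw [← Equiv.Perm.lcm_cycleType, hσ, ← Finset.lcm_def, aux_lcm_eq a ha]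
  · -- even case
    intro heven
    have h2S : 2 ∈ S := Nat.mem_primeFactors.mpr ⟨Nat.prime_two, heven.two_dvd, ha.ne'⟩
    have h2a : 2 ∣ a := heven.two_dvd
    constructor
    · rintro ⟨σ, hsign, horder⟩
      exact le_trans ((fwd σ horder).2 heven (aux_sign_even σ hsign)) (hsupp σ)
    · intro hle
      set m : Multiset ℕ := 2 ::ₘ S.val.map f with hm
      have hsum : m.sum = 2 + ∑ p ∈ S, f p := by
        rw [hm, Multiset.sum_cons]; rfl
      have hcard : Multiset.card m = S.card + 1 := by simp [hm]
      have hmem2 : ∀ x ∈ m, 2 ≤ x := by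
        intro x hx
        rcases Multiset.mem_cons.mp hx with rfl | hx
        · exact le_refl 2
        · obtain ⟨p, hp, rfl⟩ := Multiset.mem_map.mp hx
          exact hf2 p hp
      obtain ⟨σ, hσ⟩ := (Equiv.Perm.exists_with_cycleType_iff (α := Fin n)).mpr
        ⟨by rw [hcardn, hsum]; exact hle, hmem2⟩
      refine ⟨σ, ?_, ?_⟩
      · rw [Equiv.Perm.sign_of_cycleType, hσ, hsum, hcard]
        apply Even.neg_one_pow
        have hoddf' : ∀ p ∈ S.erase 2, Odd (f p) := by
          intro p hp
          have hpne2 : p ≠ 2 := Finset.ne_of_mem_erase hp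
          exact Odd.pow ((hprime p (Finset.mem_of_mem_erase hp)).odd_of_ne_two hpne2)
        have hpar : Even (∑ p ∈ S.erase 2, f p + (S.erase 2).card) := aux_odd_parity hoddf'
        have hsplit : f 2 + ∑ p ∈ S.erase 2, f p = ∑ p ∈ S, f p :=
          Finset.add_sum_erase S f h2S
        have hcarderase : (S.erase 2).card = S.card - 1 := Finset.card_erase_of_mem h2S
        have hScard : 1 ≤ S.card := Finset.card_pos.mpr ⟨2, h2S⟩
        have hf2even : Even (f 2) := by
          have h1 : 1 ≤ a.factorization 2 := halpha 2 h2S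
          exact Nat.even_pow.mpr ⟨even_two, by omega⟩
        obtain ⟨u, hu⟩ := hpar
        obtain ⟨v, hv⟩ := hf2even
        exact ⟨u + v + 2, by omega⟩
      · rw [← Equiv.Perm.lcm_cycleType, hσ, hm, Multiset.lcm_cons, lcm_eq_nat_lcm]
        have : (S.val.map f).lcm = a := by rw [← Finset.lcm_def, aux_lcm_eq a ha]
        rw [this]
        exact Nat.dvd_antisymm (Nat.lcm_dvd h2a dvd_rfl) (Nat.dvd_lcm_right 2 a)
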